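/- Fix real numbers γ_E > 0, α > 0, and R > 0. Then lim_{γ_D → ∞} γ_D · 𝒫₃(α·γ_D, γ_D, γ_E, R) = (2^R − 1)·(1 + 1/α) + 2^R·γ_E·(1 + 1/α). In particular, with γ_R = α·γ_D and γ_E fixed, the Case III secrecy outage probability satisfies 𝒫₃ ≈ 𝓜₃·γ_D^{−1} with 𝓜₃ = (2^R − 1)(1 + 1/α) + 2^R·γ_E·(1 + 1/α) > 0 as γ_D → ∞, so the secrecy diversity order is 1. -/

import Mathlib

open Filter Real

/-- Case III closed-form secrecy outage probability. -/
noncomputable def P3 (γR γD γE R : ℝ) : ℝ :=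
  1 - Real.exp (-((2 : ℝ) ^ R - 1) / γD - ((2 : ℝ) ^ R - 1) / γR) *
    (1 + ((2 : ℝ) ^ R / γD) * γE)⁻¹ * (1 + ((2 : ℝ) ^ R / γR) * γE)⁻¹

lemma g_deriv (a b c : ℝ) :
    HasDerivAt (fun x : ℝ => 1 - Real.exp (-(a * x)) * (1 + b * x)⁻¹ * (1 + c * x)⁻¹)
      (a + b + c) 0 := by
  have h1 : HasDerivAt (fun x : ℝ => Real.exp (-(a * x))) (-a) 0 := by
    have := (((hasDerivAt_id (0:ℝ)).const_mul a).neg).exp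
    simpa using this
  have h2 : HasDerivAt (fun x : ℝ => (1 + b * x)⁻¹) (-b) 0 := by
    have hb : HasDerivAt (fun x : ℝ => 1 + b * x) b 0 := by
      simpa using ((hasDerivAt_id (0:ℝ)).const_mul b).const_add 1
    have := hb.inv (by norm_num)
    simpa [Pi.inv_def] using this
  have h3 : HasDerivAt (fun x : ℝ => (1 + c * x)⁻¹) (-c) 0 := by
    have hc : HasDerivAt (fun x : ℝ => 1 + c * x) c 0 := by
      simpa using ((hasDerivAt_id (0:ℝ)).const_mul c).const_add 1
    have := hc.inv (by norm_num)
    simpa [Pi.inv_def] using this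
  have h := ((h1.mul h2).mul h3).const_sub 1
  refine h.congr_deriv ?_
  norm_num
  ring

/-- Theorem 8 (Case III, first high-SNR scenario): with `γ_E` fixed and `γ_R = α·γ_D → ∞`,
`γ_D · 𝒫₃ → 𝓜₃ = (2^R − 1)(1 + 1/α) + 2^R·γ_E·(1 + 1/α)`, and `𝓜₃ > 0`
(so the secrecy diversity order is 1). -/
theorem case3_asymptotic_fixed_eve (γE α R : ℝ) (hγE : 0 < γE) (hα : 0 < α) (hR : 0 < R) :
    Tendsto (fun γD : ℝ => γD * P3 (α * γD) γD γE R) atTop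
      (nhds (((2 : ℝ) ^ R - 1) * (1 + 1 / α) + (2 : ℝ) ^ R * γE * (1 + 1 / α))) ∧
    0 < ((2 : ℝ) ^ R - 1) * (1 + 1 / α) + (2 : ℝ) ^ R * γE * (1 + 1 / α) := by
  have h2R : (1:ℝ) < (2:ℝ) ^ R := (Real.one_lt_rpow_iff_of_pos two_pos).mpr (Or.inl ⟨one_lt_two, hR⟩)
  have hpos : 0 < ((2 : ℝ) ^ R - 1) * (1 + 1 / α) + (2 : ℝ) ^ R * γE * (1 + 1 / α) := by
    have h1 : 0 < 1 + 1 / α := by positivity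
    have h2 : 0 < (2:ℝ) ^ R - 1 := by linarith
    have h3 : (0:ℝ) < (2:ℝ) ^ R := by linarith
    positivity
  refine ⟨?_, hpos⟩
  set a : ℝ := ((2:ℝ) ^ R - 1) * (1 + 1 / α) with ha
  set b : ℝ := (2:ℝ) ^ R * γE with hb
  set c : ℝ := (2:ℝ) ^ R * γE / α with hc
  set g : ℝ → ℝ := fun x => 1 - Real.exp (-(a * x)) * (1 + b * x)⁻¹ * (1 + c * x)⁻¹ with hg
  have hderiv : HasDerivAt g (a + b + c) 0 := g_deriv a b c
  have hslope : Tendsto (slope g 0) (nhdsWithin 0 {(0:ℝ)}ᶜ) (nhds (a + b + c)) :=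
    hasDerivAt_iff_tendsto_slope.mp hderiv
  have hinv : Tendsto (fun γD : ℝ => γD⁻¹) atTop (nhdsWithin 0 {(0:ℝ)}ᶜ) := by
    rw [tendsto_nhdsWithin_iff]
    refine ⟨tendsto_inv_atTop_zero, ?_⟩
    filter_upwards [eventually_gt_atTop (0:ℝ)] with x hx
    simp [ne_of_gt, inv_ne_zero hx.ne']
  have hcomp := hslope.comp hinv
  have heq : a + b + c = ((2 : ℝ) ^ R - 1) * (1 + 1 / α) + (2 : ℝ) ^ R * γE * (1 + 1 / α) := by
    rw [ha, hb, hc]; ring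
  rw [← heq]
  refine hcomp.congr' ?_
  filter_upwards [eventually_gt_atTop (0:ℝ)] with x hx
  have hx0 : x ≠ 0 := hx.ne'
  have hg0 : g 0 = 0 := by simp [hg]
  have : (slope g 0 ∘ fun γD : ℝ => γD⁻¹) x = x * g x⁻¹ := by
    simp [slope, hg0, div_eq_inv_mul]
  rw [this]
  congr 1
  rw [hg, P3]
  have e1 : -((2:ℝ) ^ R - 1) / x - ((2:ℝ) ^ R - 1) / (α * x) = -(a * x⁻¹) := by
    rw [ha]; field_simp; ring
  have e2 : 1 + ((2:ℝ) ^ R / x) * γE = 1 + b * x⁻¹ := by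
    rw [hb]; field_simp
  have e3 : 1 + ((2:ℝ) ^ R / (α * x)) * γE = 1 + c * x⁻¹ := by
    rw [hc]; field_simp
  rw [e1, e2, e3]
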